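/- Let n, M ∈ ℕ, let d ∈ ℝⁿ satisfy dᵢ > 0 for all i, let D = diag(d₁, …, dₙ) ∈ ℝ^{n×n}, let S ∈ ℝ^{n×n} satisfy S_{ij} ≤ 0 for all i ≠ j, and let τ ≥ 0. Set P := exp(−τ D^{−1} S). Let a_m ∈ ℝⁿ for m = 0, …, M−1 be arbitrary vectors, and define a sequence U_0, U_1, …, U_M ∈ ℝⁿ by choosing U_0 with all entries nonnegative and setting, for 0 ≤ m ≤ M−1, U_{m+1} = P v_m, where v_m ∈ ℝⁿ is the vector with entries (v_m)_j = e^{(a_m)_j} (U_m)_j. Then for every 0 ≤ m ≤ M and every 1 ≤ j ≤ n, (U_m)_j ≥ 0. -/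

import Mathlib

open NormedSpace


lemma pow_entry_nonneg {n : ℕ} (A : Matrix (Fin n) (Fin n) ℝ)
    (hA : ∀ i j, 0 ≤ A i j) (k : ℕ) : ∀ i j, 0 ≤ (A ^ k) i j := by
  induction k with
  | zero =>
    intro i j
    simp only [pow_zero, Matrix.one_apply]
    by_cases h : i = j <;> simp [h]
  | succ k ih =>
    intro i j
    rw [pow_succ, Matrix.mul_apply]
    exact Finset.sum_nonneg fun l _ => mul_nonneg (ih i l) (hA l j)

lemma exp_entry_nonneg_of_entry_nonneg {n : ℕ} (A : Matrix (Fin n) (Fin n) ℝ)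
    (hA : ∀ i j, 0 ≤ A i j) : ∀ i j, 0 ≤ exp A i j := by
  letI : SeminormedRing (Matrix (Fin n) (Fin n) ℝ) := Matrix.linftyOpSemiNormedRing
  letI : NormedRing (Matrix (Fin n) (Fin n) ℝ) := Matrix.linftyOpNormedRing
  letI : NormedAlgebra ℝ (Matrix (Fin n) (Fin n) ℝ) := Matrix.linftyOpNormedAlgebra
  intro i j
  have hsum : HasSum (fun k : ℕ => ((Nat.factorial k : ℝ))⁻¹ • A ^ k) (exp A) := by
    rw [exp_eq_tsum (𝕂 := ℝ)]; exact (expSeries_summable' (𝕂 := ℝ) A).hasSum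
  let φ : Matrix (Fin n) (Fin n) ℝ →ₗ[ℝ] ℝ :=
    { toFun := fun B => B i j
      map_add' := fun _ _ => rfl
      map_smul' := fun _ _ => rfl }
  have hsum' : HasSum (fun k : ℕ => ((Nat.factorial k : ℝ))⁻¹ * (A ^ k) i j) (exp A i j) := by
    have := hsum.mapL (LinearMap.toContinuousLinearMap φ)
    exact this
  refine hsum'.nonneg fun k => ?_
  exact mul_nonneg (by positivity) (pow_entry_nonneg A hA k i j)


lemma exp_smul_one {n : ℕ} (r : ℝ) :
    NormedSpace.exp (r • (1 : Matrix (Fin n) (Fin n) ℝ)) =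
      Real.exp r • (1 : Matrix (Fin n) (Fin n) ℝ) := by
  letI : SeminormedRing (Matrix (Fin n) (Fin n) ℝ) := Matrix.linftyOpSemiNormedRing
  letI : NormedRing (Matrix (Fin n) (Fin n) ℝ) := Matrix.linftyOpNormedRing
  letI : NormedAlgebra ℝ (Matrix (Fin n) (Fin n) ℝ) := Matrix.linftyOpNormedAlgebra
  have h1 : HasSum (fun k : ℕ => ((Nat.factorial k : ℝ))⁻¹ •
      (r • (1 : Matrix (Fin n) (Fin n) ℝ)) ^ k)
      (exp (r • (1 : Matrix (Fin n) (Fin n) ℝ))) := by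
    rw [exp_eq_tsum (𝕂 := ℝ)]; exact
      (expSeries_summable' (𝕂 := ℝ) (r • (1 : Matrix (Fin n) (Fin n) ℝ))).hasSum
  have hr : HasSum (fun k : ℕ => ((Nat.factorial k : ℝ))⁻¹ * r ^ k) (Real.exp r) := by
    simpa [Real.exp_eq_exp_ℝ, exp_eq_tsum (𝕂 := ℝ)] using (expSeries_summable' (𝕂 := ℝ) r).hasSum
  have h2 : HasSum (fun k : ℕ => ((Nat.factorial k : ℝ))⁻¹ •
      (r • (1 : Matrix (Fin n) (Fin n) ℝ)) ^ k)
      (Real.exp r • (1 : Matrix (Fin n) (Fin n) ℝ)) := by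
    have := hr.smul_const (1 : Matrix (Fin n) (Fin n) ℝ)
    simpa [smul_pow, one_pow, smul_smul] using this
  exact h1.unique h2

/-- exponential of a Metzler matrix is entrywise nonnegative -/
lemma exp_entry_nonneg_of_metzler {n : ℕ} (A : Matrix (Fin n) (Fin n) ℝ)
    (hA : ∀ i j, i ≠ j → 0 ≤ A i j) : ∀ i j, 0 ≤ exp A i j := by
  intro i j
  set c : ℝ := ∑ l, |A l l| with hc
  have hc0 : ∀ l, -A l l ≤ c := by
    intro l
    calc -A l l ≤ |A l l| := neg_le_abs _
    _ ≤ c := Finset.single_le_sum (f := fun l => |A l l|)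
        (fun _ _ => abs_nonneg _) (Finset.mem_univ l)
  have hB : ∀ i j, 0 ≤ (A + c • (1 : Matrix (Fin n) (Fin n) ℝ)) i j := by
    intro i j
    by_cases h : i = j
    · subst h
      simp only [Matrix.add_apply, Matrix.smul_apply, Matrix.one_apply_eq, smul_eq_mul, mul_one]
      linarith [hc0 i]
    · simp only [Matrix.add_apply, Matrix.smul_apply, Matrix.one_apply_ne h, smul_eq_mul,
        mul_zero, add_zero]
      exact hA i j h
  have hcomm : Commute (A + c • (1 : Matrix (Fin n) (Fin n) ℝ))
      (-(c • (1 : Matrix (Fin n) (Fin n) ℝ))) := by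
    refine Commute.neg_right ?_
    exact (Commute.one_right _).smul_right c
  have hsplit : A = (A + c • (1 : Matrix (Fin n) (Fin n) ℝ)) +
      (-(c • (1 : Matrix (Fin n) (Fin n) ℝ))) := by abel
  have halg : -(c • (1 : Matrix (Fin n) (Fin n) ℝ)) =
      (-c) • (1 : Matrix (Fin n) (Fin n) ℝ) := by rw [neg_smul]
  have hexp : exp A = exp (A + c • (1 : Matrix (Fin n) (Fin n) ℝ)) *
      (Real.exp (-c) • (1 : Matrix (Fin n) (Fin n) ℝ)) := by
    conv_lhs => rw [hsplit]
    rw [Matrix.exp_add_of_commute _ _ hcomm, halg, exp_smul_one, Real.exp_neg]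
  rw [hexp]
  have h1 : (exp (A + c • (1 : Matrix (Fin n) (Fin n) ℝ)) *
      (Real.exp (-c) • (1 : Matrix (Fin n) (Fin n) ℝ))) i j =
      Real.exp (-c) * exp (A + c • (1 : Matrix (Fin n) (Fin n) ℝ)) i j := by
    rw [Matrix.mul_smul, Matrix.mul_one, Matrix.smul_apply, smul_eq_mul]
  rw [h1]
  exact mul_nonneg (Real.exp_pos _).le (exp_entry_nonneg_of_entry_nonneg _ hB i j)

/-- **Theorem 4.1 (pathwise nonnegativity of the Lie–Trotter scheme).** Let
`D = diag(d)` with `dᵢ > 0`, let `S` have nonpositive off-diagonal entries, `τ ≥ 0`,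
and set `P = exp(-τ D⁻¹ S)`. If a sequence `U 0, …, U M` in `ℝⁿ` starts from an
entrywise nonnegative `U 0` and satisfies `U (m+1) = P (e^{(a m)ⱼ} (U m)ⱼ)ⱼ` for
`0 ≤ m ≤ M - 1` and arbitrary vectors `a m ∈ ℝⁿ`, then every `U m`, `0 ≤ m ≤ M`, is
entrywise nonnegative. -/
theorem lie_trotter_scheme_nonneg
    (n M : ℕ) (d : Fin n → ℝ) (hd : ∀ i, 0 < d i)
    (S : Matrix (Fin n) (Fin n) ℝ) (hS : ∀ i j, i ≠ j → S i j ≤ 0)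
    (τ : ℝ) (hτ : 0 ≤ τ)
    (P : Matrix (Fin n) (Fin n) ℝ)
    (hP : P = NormedSpace.exp (-(τ • ((Matrix.diagonal d)⁻¹ * S))))
    (a : ℕ → Fin n → ℝ) (U : ℕ → Fin n → ℝ)
    (hU0 : ∀ j, 0 ≤ U 0 j)
    (hUstep : ∀ m < M, U (m + 1) = P.mulVec fun j => Real.exp (a m j) * U m j) :
    ∀ m ≤ M, ∀ j, 0 ≤ U m j := by
  have hPnn : ∀ i j, 0 ≤ P i j := by
    rw [hP]
    refine exp_entry_nonneg_of_metzler _ fun i j hij => ?_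
    have hinv : (Matrix.diagonal d)⁻¹ = Matrix.diagonal fun i => (d i)⁻¹ := by
      refine Matrix.inv_eq_left_inv ?_
      rw [Matrix.diagonal_mul_diagonal]
      rw [show (fun i => (d i)⁻¹ * d i) = fun _ => (1 : ℝ) from
        funext fun i => inv_mul_cancel₀ (hd i).ne', Matrix.diagonal_one]
    have : ((Matrix.diagonal d)⁻¹ * S) i j = (d i)⁻¹ * S i j := by
      rw [hinv, Matrix.diagonal_mul]
    simp only [Matrix.neg_apply, Matrix.smul_apply, this, smul_eq_mul]
    have : (d i)⁻¹ * S i j ≤ 0 :=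
      mul_nonpos_of_nonneg_of_nonpos (inv_nonneg.mpr (hd i).le) (hS i j hij)
    nlinarith
  intro m hm
  induction m with
  | zero => exact hU0
  | succ m ih =>
    have hmM : m < M := Nat.lt_of_succ_le hm
    intro j
    rw [hUstep m hmM]
    unfold Matrix.mulVec dotProduct
    refine Finset.sum_nonneg fun l _ => ?_
    exact mul_nonneg (hPnn j l)
      (mul_nonneg (Real.exp_pos _).le (ih (le_of_lt hmM) l))
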